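/- Let $D\subset D_1$ be symmetric open subsets of $\mathbb{C}$ such that $H_1(D)\to H_1(D_1)$ (induced by inclusion) is injective. Then $H_1(D^+)\to H_1(D_1^+)$ is injective, where $D^+=\{z\in D: \mathrm{Im}(z)\geq 0\}$ and similarly for $D_1^+$. -/

import Mathlib

open CategoryTheory

noncomputable def singularHomologyFunctor (n : ℕ) : TopCat ⥤ ModuleCat ℤ :=
  TopCat.toSSet ⋙ ((SimplicialObject.whiskering _ _).obj (ModuleCat.free ℤ)) ⋙
    AlgebraicTopology.alternatingFaceMapComplex (ModuleCat ℤ) ⋙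
    HomologicalComplex.homologyFunctor (ModuleCat ℤ) (ComplexShape.down ℕ) n

/-- Singular homology of a topological space with integer coefficients. -/
noncomputable def SH (n : ℕ) (X : Type) [TopologicalSpace X] : Type :=
  (singularHomologyFunctor n).obj (TopCat.of X)

noncomputable instance SH.instAddCommGroup (n : ℕ) (X : Type) [TopologicalSpace X] :
    AddCommGroup (SH n X) :=
  ((singularHomologyFunctor n).obj (TopCat.of X)).isAddCommGroup

noncomputable instance SH.instModule (n : ℕ) (X : Type) [TopologicalSpace X] :
    Module ℤ (SH n X) :=
  ((singularHomologyFunctor n).obj (TopCat.of X)).isModule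

/-- The map induced on singular homology by a continuous map. -/
noncomputable def SHlin (n : ℕ) {X Y : Type} [TopologicalSpace X] [TopologicalSpace Y]
    (f : C(X, Y)) : SH n X →ₗ[ℤ] SH n Y :=
  ((singularHomologyFunctor n).map (X := TopCat.of X) (Y := TopCat.of Y) (TopCat.ofHom f)).hom

/-- The map induced on singular homology by an inclusion of subspaces. -/
noncomputable def SHincl (n : ℕ) {α : Type} [TopologicalSpace α] {S T : Set α} (h : S ⊆ T) :
    SH n S →ₗ[ℤ] SH n T :=
  SHlin n ⟨Set.inclusion h, continuous_inclusion h⟩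

/-- The closed upper part of `D`. -/
def Dplus (D : Set ℂ) : Set ℂ := {z | z ∈ D ∧ 0 ≤ z.im}


noncomputable def fold (D : Set ℂ) (hsymD : ∀ z ∈ D, (starRingEnd ℂ) z ∈ D) :
    C(D, Dplus D) where
  toFun z := ⟨(((z : ℂ).re : ℂ) + (|(z : ℂ).im| : ℝ) * Complex.I), by
    constructor
    · rcases le_or_gt 0 (z : ℂ).im with h | h
      · have : (((z : ℂ).re : ℂ) + (|(z : ℂ).im| : ℝ) * Complex.I) = (z : ℂ) := by
          rw [abs_of_nonneg h]; exact (Complex.re_add_im _)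
        rw [this]; exact z.2
      · have : (((z : ℂ).re : ℂ) + (|(z : ℂ).im| : ℝ) * Complex.I)
            = (starRingEnd ℂ) (z : ℂ) := by
          apply Complex.ext <;> simp [abs_of_neg h]
        rw [this]; exact hsymD _ z.2
    · simp [abs_nonneg]⟩
  continuous_toFun := by
    apply Continuous.subtype_mk
    fun_prop

lemma fold_incl (D : Set ℂ) (hsymD : ∀ z ∈ D, (starRingEnd ℂ) z ∈ D) :
    (fold D hsymD).comp ⟨Set.inclusion (fun _ hz => hz.1), continuous_inclusion _⟩
      = ContinuousMap.id (Dplus D) := by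
  ext z
  show ((((z : ℂ).re : ℂ)) + (|(z : ℂ).im| : ℝ) * Complex.I) = (z : ℂ)
  rw [abs_of_nonneg z.2.2]; exact Complex.re_add_im _

lemma SHlin_comp (n : ℕ) {X Y Z : Type} [TopologicalSpace X] [TopologicalSpace Y]
    [TopologicalSpace Z] (f : C(X, Y)) (g : C(Y, Z)) :
    SHlin n (g.comp f) = (SHlin n g).comp (SHlin n f) := by
  unfold SHlin
  rw [show TopCat.ofHom (g.comp f) = TopCat.ofHom f ≫ TopCat.ofHom g from rfl, Functor.map_comp]
  rfl

lemma SHlin_id (n : ℕ) (X : Type) [TopologicalSpace X] :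
    SHlin n (ContinuousMap.id X) = LinearMap.id := by
  unfold SHlin
  rw [show TopCat.ofHom (ContinuousMap.id X) = 𝟙 (TopCat.of X) from rfl]
  exact congrArg ModuleCat.Hom.hom ((singularHomologyFunctor n).map_id (TopCat.of X))

/-- If `D ⊆ D₁` are symmetric open subsets of `ℂ` and `H₁(D) → H₁(D₁)` is injective,
then `H₁(D⁺) → H₁(D₁⁺)` is injective. -/
theorem h1_plus_injective (D D₁ : Set ℂ) (hD : IsOpen D) (hD₁ : IsOpen D₁)
    (hsymD : ∀ z ∈ D, (starRingEnd ℂ) z ∈ D)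
    (hsymD₁ : ∀ z ∈ D₁, (starRingEnd ℂ) z ∈ D₁)
    (hsub : D ⊆ D₁)
    (hinj : Function.Injective (SHincl 1 hsub)) :
    Function.Injective
      (SHincl 1 (fun z hz => ⟨hsub hz.1, hz.2⟩ : Dplus D ⊆ Dplus D₁)) := by
  have hDpD : Dplus D ⊆ D := fun z hz => hz.1
  have hDp1 : Dplus D₁ ⊆ D₁ := fun z hz => hz.1
  have hsubplus : Dplus D ⊆ Dplus D₁ := fun z hz => ⟨hsub hz.1, hz.2⟩
  -- `H₁(D⁺) → H₁(D)` is split injective via the folding retraction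
  have hretr : Function.Injective (SHincl 1 hDpD) := by
    have h := congrArg (SHlin 1) (fold_incl D hsymD)
    rw [SHlin_comp, SHlin_id] at h
    exact Function.LeftInverse.injective
      (g := SHlin 1 (fold D hsymD)) (fun a => LinearMap.congr_fun h a)
  -- the square commutes
  have key : (SHincl 1 hDp1).comp (SHincl 1 hsubplus)
      = (SHincl 1 hsub).comp (SHincl 1 hDpD) := by
    unfold SHincl
    rw [← SHlin_comp, ← SHlin_comp]
    congr 1
  have hcomp : Function.Injective ((SHincl 1 hDp1).comp (SHincl 1 hsubplus)) := by
    rw [key, LinearMap.coe_comp]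
    exact hinj.comp hretr
  rw [LinearMap.coe_comp] at hcomp
  exact Function.Injective.of_comp hcomp
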